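/- arXiv:1807.08610 — 6 statements merged into one kernel-verified Lean document; each statement's English description precedes it below -/
import Mathlib

section
/- Let S be a step set satisfying Hypothesis (H), let i₀ ≥ 0, and let c_{i,j}(n) count n-step S-walks in the three-quadrant cone C starting at (i₀,i₀) and ending at (i,j). Then the following identity of formal power series in t, with coefficients in ℚ[x, x^{−1}, y, y^{−1}], holds: L̂(x,y) = t·(Σ_{(i,j)∈S} x^i y^j)·L̂(x,y) + t(δ_{1,0}x + δ_{0,−1}y^{−1})·D̂(x,y) − t(δ_{−1,0}x^{−1} + δ_{0,1}y)·D̂^ℓ(x,y) − t(δ_{−1,0}x^{−1} + δ_{−1,−1}x^{−1}y^{−1})·L̂_{0−}(y^{−1}) + t·δ_{−1,0}·x^{−1}y^{−1}·Σ_{n≥0} c_{0,−1}(n) t^n. -/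
open scoped BigOperators

/-- The three-quadrant cone `𝒞 = {(i,j) ∈ ℤ² : i ≥ 0 or j ≥ 0}`. -/
def cone : Set (ℤ × ℤ) := {p | 0 ≤ p.1 ∨ 0 ≤ p.2}

/-- `walkCount S R p₀ n q`: the number of `n`-step walks with steps in `S`, all of whose
points lie in the region `R`, starting at `p₀` and ending at `q`. -/
noncomputable def walkCount (S : Finset (ℤ × ℤ)) (R : Set (ℤ × ℤ)) (p₀ : ℤ × ℤ)
    (n : ℕ) (q : ℤ × ℤ) : ℕ :=
  Nat.card {w : Fin (n + 1) → ℤ × ℤ //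
    w 0 = p₀ ∧ w (Fin.last n) = q ∧ (∀ k, w k ∈ R) ∧
    ∀ k : Fin n, w k.succ - w k.castSucc ∈ S}

/-- Laurent polynomials in the two variables `x, y`, with rational coefficients. -/
abbrev LP : Type := AddMonoidAlgebra ℚ (ℤ × ℤ)

/-- The Laurent monomial `x^i y^j`. -/
noncomputable def mono (v : ℤ × ℤ) : LP := AddMonoidAlgebra.single v 1

/-- Formal power series in `t` with Laurent-polynomial coefficients. -/
abbrev PS : Type := PowerSeries LP

noncomputable def CL : LP →+* PS := PowerSeries.C

/-- The series variable `t`. -/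
noncomputable def T : PS := PowerSeries.X

/-- The rational constant `1/2`. -/
noncomputable def half : PS := PowerSeries.C (algebraMap ℚ LP (1/2))

/-- The points reachable from `p₀` in at most `n` small steps. -/
noncomputable def box (p₀ : ℤ × ℤ) (n : ℕ) : Finset (ℤ × ℤ) :=
  Finset.Icc (p₀.1 - n, p₀.2 - n) (p₀.1 + n, p₀.2 + n)

/-- The diagonal starting point `(i₀, i₀)`. -/
def start (i₀ : ℕ) : ℤ × ℤ := ((i₀ : ℤ), (i₀ : ℤ))

/-- The kernel `K(x,y) = xy (t ∑_{(i,j) ∈ S} x^i y^j - 1)`. -/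
noncomputable def kerK (S : Finset (ℤ × ℤ)) : PS :=
  CL (mono (1, 1)) * (T * CL (∑ s ∈ S, mono s) - 1)

/-- `δ_v`: the indicator that the step `v` belongs to `S`. -/
noncomputable def dl (S : Finset (ℤ × ℤ)) (v : ℤ × ℤ) : PS := if v ∈ S then 1 else 0

/-- `L̂(x,y) = ∑_{n ≥ 0} ∑_{i ≥ 0, j ≤ i-1} c_{i,j}(n) x^i y^j t^n`:
walks ending strictly below the diagonal (in the lower part). -/
noncomputable def Lhat (S : Finset (ℤ × ℤ)) (i₀ : ℕ) : PS :=
  PowerSeries.mk fun n =>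
    ∑ p ∈ (box (start i₀) n).filter (fun p => 0 ≤ p.1 ∧ p.2 ≤ p.1 - 1),
      (walkCount S cone (start i₀) n p : LP) * mono p

/-- `Û(x,y) = ∑_{n ≥ 0} ∑_{j ≥ 0, i ≤ j-1} c_{i,j}(n) x^i y^j t^n`:
walks ending strictly above the diagonal (in the upper part). -/
noncomputable def Uhat (S : Finset (ℤ × ℤ)) (i₀ : ℕ) : PS :=
  PowerSeries.mk fun n =>
    ∑ p ∈ (box (start i₀) n).filter (fun p => 0 ≤ p.2 ∧ p.1 ≤ p.2 - 1),
      (walkCount S cone (start i₀) n p : LP) * mono p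

/-- `D̂(x,y) = ∑_{n ≥ 0} ∑_{i ≥ 0} c_{i,i}(n) x^i y^i t^n`: walks ending on the diagonal. -/
noncomputable def Dhat (S : Finset (ℤ × ℤ)) (i₀ : ℕ) : PS :=
  PowerSeries.mk fun n =>
    ∑ i ∈ Finset.Icc (0 : ℤ) ((i₀ : ℤ) + n),
      (walkCount S cone (start i₀) n (i, i) : LP) * mono (i, i)

/-- `D̂^ℓ(x,y) = ∑_{n ≥ 0} ∑_{i ≥ 0} c_{i,i-1}(n) x^i y^{i-1} t^n`:
walks ending on the lower diagonal. -/
noncomputable def Dlow (S : Finset (ℤ × ℤ)) (i₀ : ℕ) : PS :=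
  PowerSeries.mk fun n =>
    ∑ i ∈ Finset.Icc (0 : ℤ) ((i₀ : ℤ) + n),
      (walkCount S cone (start i₀) n (i, i - 1) : LP) * mono (i, i - 1)

/-- `L̂_{0-}(y⁻¹) = ∑_{n ≥ 0} ∑_{j < 0} c_{0,j}(n) y^j t^n`:
walks ending on the negative `y`-axis. -/
noncomputable def L0minus (S : Finset (ℤ × ℤ)) (i₀ : ℕ) : PS :=
  PowerSeries.mk fun n =>
    ∑ j ∈ Finset.Icc ((i₀ : ℤ) - n) (-1),
      (walkCount S cone (start i₀) n (0, j) : LP) * mono (0, j)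

/-- `D̂(0,0) = ∑_{n ≥ 0} c_{0,0}(n) t^n`: walks ending at the origin. -/
noncomputable def D00 (S : Finset (ℤ × ℤ)) (i₀ : ℕ) : PS :=
  PowerSeries.mk fun n => (walkCount S cone (start i₀) n (0, 0) : LP)

/-- `∑_{n ≥ 0} c_{0,-1}(n) t^n`: walks ending at `(0,-1)`. -/
noncomputable def C0m1 (S : Finset (ℤ × ℤ)) (i₀ : ℕ) : PS :=
  PowerSeries.mk fun n => (walkCount S cone (start i₀) n (0, -1) : LP)

section Walks

variable (S : Finset (ℤ × ℤ)) (i₀ : ℕ)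

def WSet (n : ℕ) (q : ℤ × ℤ) : Type :=
  {w : Fin (n + 1) → ℤ × ℤ //
    w 0 = start i₀ ∧ w (Fin.last n) = q ∧ (∀ k, w k ∈ cone) ∧
    ∀ k : Fin n, w k.succ - w k.castSucc ∈ S}

lemma walkCount_eq (n : ℕ) (q : ℤ × ℤ) :
    walkCount S cone (start i₀) n q = Nat.card (WSet S i₀ n q) := rfl

variable {S i₀}

lemma walk_mem_box (hS : S ⊆ (Finset.Icc (-1, -1) (1, 1)).erase (0, 0)) (n : ℕ) (q : ℤ × ℤ)
    (w : WSet S i₀ n q) (k : Fin (n + 1)) :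
    (i₀ : ℤ) - k ≤ (w.1 k).1 ∧ (w.1 k).1 ≤ (i₀ : ℤ) + k ∧
    (i₀ : ℤ) - k ≤ (w.1 k).2 ∧ (w.1 k).2 ≤ (i₀ : ℤ) + k := by
  obtain ⟨w, h0, hl, hc, hstep⟩ := w
  suffices H : ∀ m : ℕ, ∀ hm : m < n + 1,
      (i₀ : ℤ) - m ≤ (w ⟨m, hm⟩).1 ∧ (w ⟨m, hm⟩).1 ≤ (i₀ : ℤ) + m ∧
      (i₀ : ℤ) - m ≤ (w ⟨m, hm⟩).2 ∧ (w ⟨m, hm⟩).2 ≤ (i₀ : ℤ) + m by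
    have := H k.1 k.2
    simpa using this
  intro m
  induction m with
  | zero => intro hm
            have : (⟨0, hm⟩ : Fin (n+1)) = 0 := rfl
            rw [this, h0]
            simp [start]
  | succ m ih =>
    intro hm
    have hm' : m < n + 1 := by omega
    have hmn : m < n := by omega
    have hstep' := hstep ⟨m, hmn⟩
    have hsucc : (⟨m, hmn⟩ : Fin n).succ = ⟨m + 1, hm⟩ := rfl
    have hcast : (⟨m, hmn⟩ : Fin n).castSucc = ⟨m, hm'⟩ := rfl
    rw [hsucc, hcast] at hstep'
    have hmem := hS hstep'
    rw [Finset.mem_erase, Finset.mem_Icc] at hmem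
    obtain ⟨-, h1, h2⟩ := hmem
    rw [Prod.le_def] at h1 h2
    obtain ⟨ih1, ih2, ih3, ih4⟩ := ih hm'
    have e1 : (w ⟨m+1, hm⟩).1 = (w ⟨m, hm'⟩).1 + ((w ⟨m+1, hm⟩) - (w ⟨m, hm'⟩)).1 := by
      simp
    have e2 : (w ⟨m+1, hm⟩).2 = (w ⟨m, hm'⟩).2 + ((w ⟨m+1, hm⟩) - (w ⟨m, hm'⟩)).2 := by
      simp
    simp only [Prod.fst_sub, Prod.snd_sub] at e1 e2 h1 h2
    push_cast
    omega

lemma wset_finite (hS : S ⊆ (Finset.Icc (-1, -1) (1, 1)).erase (0, 0)) (n : ℕ) (q : ℤ × ℤ) :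
    Finite (WSet S i₀ n q) := by
  have : ∀ w : WSet S i₀ n q, ∀ k, w.1 k ∈ (box (start i₀) n : Finset (ℤ × ℤ)) := by
    intro w k
    have := walk_mem_box hS n q w k
    have hk : (k : ℤ) ≤ (n : ℤ) := by exact_mod_cast Nat.lt_succ_iff.mp k.2
    simp only [box, Finset.mem_Icc, Prod.le_def, start]
    refine ⟨⟨?_, ?_⟩, ?_, ?_⟩ <;> omega
  have hfin : (Set.univ.pi fun _ : Fin (n+1) => ((box (start i₀) n : Finset (ℤ × ℤ)) : Set (ℤ × ℤ))).Finite :=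
    Set.Finite.pi fun _ => (box (start i₀) n).finite_toSet
  have hsub : {w : Fin (n+1) → ℤ × ℤ | w 0 = start i₀ ∧ w (Fin.last n) = q ∧ (∀ k, w k ∈ cone) ∧
      ∀ k : Fin n, w k.succ - w k.castSucc ∈ S} ⊆
      Set.univ.pi fun _ : Fin (n+1) => ((box (start i₀) n : Finset (ℤ × ℤ)) : Set (ℤ × ℤ)) := by
    intro w hw
    intro k _
    exact this ⟨w, hw⟩ k
  exact (hfin.subset hsub).to_subtype

noncomputable def wsetEquiv (n : ℕ) (q : ℤ × ℤ) (hq : q ∈ cone) :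
    WSet S i₀ (n + 1) q ≃ Σ s : {s // s ∈ S}, WSet S i₀ n (q - s.1) where
  toFun w := by
    refine ⟨⟨w.1 (Fin.last (n+1)) - w.1 ((Fin.last n).castSucc), ?_⟩,
      ⟨w.1 ∘ Fin.castSucc, ?_, ?_, ?_, ?_⟩⟩
    · have := w.2.2.2.2 (Fin.last n)
      rwa [Fin.succ_last] at this
    · show w.1 ((0 : Fin (n+1)).castSucc) = start i₀
      rw [Fin.castSucc_zero]
      exact w.2.1
    · show w.1 ((Fin.last n).castSucc) =
        q - (w.1 (Fin.last (n+1)) - w.1 ((Fin.last n).castSucc))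
      rw [w.2.2.1, sub_sub_cancel]
    · intro k; exact w.2.2.2.1 _
    · intro k
      show w.1 (k.succ.castSucc) - w.1 (k.castSucc.castSucc) ∈ S
      rw [← Fin.succ_castSucc]
      exact w.2.2.2.2 k.castSucc
  invFun p := by
    obtain ⟨⟨s, hs⟩, ⟨v, h0, hl, hc, hstep⟩⟩ := p
    refine ⟨Fin.snoc v q, ?_, ?_, ?_, ?_⟩
    · have h00 : ((0 : Fin (n+2))) = (0 : Fin (n+1)).castSucc := rfl
      rw [h00, Fin.snoc_castSucc]; exact h0
    · exact Fin.snoc_last _ _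
    · intro k
      induction k using Fin.lastCases with
      | last => rw [Fin.snoc_last]; exact hq
      | cast i => rw [Fin.snoc_castSucc]; exact hc i
    · intro k
      induction k using Fin.lastCases with
      | last =>
        rw [Fin.succ_last, Fin.snoc_last, Fin.snoc_castSucc, hl, sub_sub_cancel]
        exact hs
      | cast i =>
        rw [Fin.succ_castSucc, Fin.snoc_castSucc, Fin.snoc_castSucc]
        exact hstep i
  left_inv w := by
    apply Subtype.ext
    funext k
    induction k using Fin.lastCases with
    | last => simp [Fin.snoc_last, w.2.2.1]
    | cast i => simp [Fin.snoc_castSucc]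
  right_inv p := by
    obtain ⟨⟨s, hs⟩, ⟨v, h0, hl, hc, hstep⟩⟩ := p
    have h1 : (Fin.snoc v q : Fin (n+2) → ℤ × ℤ) (Fin.last (n+1)) -
        (Fin.snoc v q : Fin (n+2) → ℤ × ℤ) ((Fin.last n).castSucc) = s := by
      rw [Fin.snoc_last, Fin.snoc_castSucc, hl, sub_sub_cancel]
    subst h1
    refine Sigma.ext rfl ?_
    apply heq_of_eq
    apply Subtype.ext
    funext k
    show (Fin.snoc v q ∘ Fin.castSucc) k = v k
    simp

lemma nat_card_sigma {ι : Type} [Fintype ι] (α : ι → Type) [∀ i, Finite (α i)] :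
    Nat.card ((i : ι) × α i) = ∑ i, Nat.card (α i) := by
  have : ∀ i, Fintype (α i) := fun i => Fintype.ofFinite (α i)
  classical
  letI := this
  simp [Nat.card_eq_fintype_card, Fintype.card_sigma]

lemma walkCount_not_cone {n : ℕ} {q : ℤ × ℤ} (hq : q ∉ cone) :
    walkCount S cone (start i₀) n q = 0 := by
  rw [walkCount_eq]
  have : IsEmpty (WSet S i₀ n q) :=
    ⟨fun w => hq (w.2.2.1 ▸ w.2.2.2.1 (Fin.last n))⟩
  exact Nat.card_of_isEmpty

lemma walkCount_not_cone' {n : ℕ} {q : ℤ × ℤ} (h1 : q.1 < 0) (h2 : q.2 < 0) :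
    walkCount S cone (start i₀) n q = 0 :=
  walkCount_not_cone (by simp [cone]; omega)

lemma walkCount_not_box (hS : S ⊆ (Finset.Icc (-1, -1) (1, 1)).erase (0, 0))
    {n : ℕ} {q : ℤ × ℤ}
    (h : ¬((i₀ : ℤ) - n ≤ q.1 ∧ q.1 ≤ (i₀ : ℤ) + n ∧ (i₀ : ℤ) - n ≤ q.2 ∧ q.2 ≤ (i₀ : ℤ) + n)) :
    walkCount S cone (start i₀) n q = 0 := by
  rw [walkCount_eq]
  by_contra hne
  obtain ⟨⟨w⟩, -⟩ := Nat.card_ne_zero.mp hne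
  have := walk_mem_box hS n q w (Fin.last n)
  rw [w.2.2.1] at this
  simp only [Fin.val_last] at this
  exact h this

lemma walkCount_succ (hS : S ⊆ (Finset.Icc (-1, -1) (1, 1)).erase (0, 0))
    {n : ℕ} {q : ℤ × ℤ} (hq : q ∈ cone) :
    walkCount S cone (start i₀) (n + 1) q = ∑ s ∈ S, walkCount S cone (start i₀) n (q - s) := by
  rw [walkCount_eq, Nat.card_congr (wsetEquiv n q hq)]
  haveI : ∀ s : {s // s ∈ S}, Finite (WSet S i₀ n (q - s.1)) := fun s => wset_finite hS n _
  rw [nat_card_sigma]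
  rw [← Finset.sum_coe_sort S (fun s => walkCount S cone (start i₀) n (q - s))]
  rfl

end Walks

section Eval

variable {S : Finset (ℤ × ℤ)} {i₀ : ℕ}

/-- scalar walk count -/
noncomputable def W (S : Finset (ℤ × ℤ)) (i₀ : ℕ) (n : ℕ) (q : ℤ × ℤ) : ℚ :=
  (walkCount S cone (start i₀) n q : ℚ)

lemma mem_box_iff {p₀ q : ℤ × ℤ} {n : ℕ} :
    q ∈ box p₀ n ↔ p₀.1 - n ≤ q.1 ∧ q.1 ≤ p₀.1 + n ∧ p₀.2 - n ≤ q.2 ∧ q.2 ≤ p₀.2 + n := by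
  simp only [box, Finset.mem_Icc, Prod.le_def]
  tauto

lemma cast_mul_mono (k : ℕ) (p : ℤ × ℤ) :
    ((k : LP)) * mono p = AddMonoidAlgebra.single p (k : ℚ) := by
  rw [mono, AddMonoidAlgebra.natCast_def, AddMonoidAlgebra.single_mul_single, zero_add, mul_one]

lemma coeff_Lhat (hS : S ⊆ (Finset.Icc (-1, -1) (1, 1)).erase (0, 0)) (n : ℕ) (q : ℤ × ℤ) :
    (PowerSeries.coeff n (Lhat S i₀)).coeff q =
      if 0 ≤ q.1 ∧ q.2 ≤ q.1 - 1 then W S i₀ n q else 0 := by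
  rw [Lhat, PowerSeries.coeff_mk]
  simp only [cast_mul_mono]
  rw [AddMonoidAlgebra.coeff_sum, Finsupp.finset_sum_apply]
  simp only [AddMonoidAlgebra.coeff_single, Finsupp.single_apply]
  rw [Finset.sum_ite_eq']
  by_cases hb : q ∈ box (start i₀) n
  · simp only [Finset.mem_filter, hb, true_and, W]
  · rw [if_neg (fun h => hb (Finset.mem_filter.mp h).1)]
    rw [mem_box_iff] at hb
    simp only [start] at hb
    by_cases hl : 0 ≤ q.1 ∧ q.2 ≤ q.1 - 1
    · rw [if_pos hl, W, walkCount_not_box hS hb, Nat.cast_zero]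
    · rw [if_neg hl]

lemma coeff_Dhat (hS : S ⊆ (Finset.Icc (-1, -1) (1, 1)).erase (0, 0)) (n : ℕ) (q : ℤ × ℤ) :
    (PowerSeries.coeff n (Dhat S i₀)).coeff q =
      if q.2 = q.1 then W S i₀ n q else 0 := by
  rw [Dhat, PowerSeries.coeff_mk]
  simp only [cast_mul_mono]
  rw [AddMonoidAlgebra.coeff_sum, Finsupp.finset_sum_apply]
  simp only [AddMonoidAlgebra.coeff_single, Finsupp.single_apply]
  obtain ⟨q1, q2⟩ := q
  by_cases hd : q2 = q1
  · subst hd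
    simp only [Prod.mk.injEq, and_self]
    rw [Finset.sum_ite_eq']
    simp only [W]
    by_cases hi : q2 ∈ Finset.Icc (0 : ℤ) ((i₀ : ℤ) + n)
    · simp [hi]
    · have hi' := hi
      rw [Finset.mem_Icc] at hi'
      have h0 : walkCount S cone (start i₀) n (q2, q2) = 0 := by
        rcases (by omega : q2 < 0 ∨ (i₀ : ℤ) + n < q2) with h | h
        · exact walkCount_not_cone' (by simpa) (by simpa)
        · exact walkCount_not_box hS (by simp; omega)
      simp [hi, h0]
  · rw [if_neg (by simpa using hd)]
    apply Finset.sum_eq_zero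
    intro i _
    rw [if_neg]
    simp only [Prod.mk.injEq, not_and]
    intro h1 h2
    omega

lemma coeff_Dlow (hS : S ⊆ (Finset.Icc (-1, -1) (1, 1)).erase (0, 0)) (n : ℕ) (q : ℤ × ℤ) :
    (PowerSeries.coeff n (Dlow S i₀)).coeff q =
      if q.2 = q.1 - 1 then W S i₀ n q else 0 := by
  rw [Dlow, PowerSeries.coeff_mk]
  simp only [cast_mul_mono]
  rw [AddMonoidAlgebra.coeff_sum, Finsupp.finset_sum_apply]
  simp only [AddMonoidAlgebra.coeff_single, Finsupp.single_apply]
  obtain ⟨q1, q2⟩ := q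
  by_cases hd : q2 = q1 - 1
  · subst hd
    have he : ∀ i : ℤ, ((i, i - 1) = ((q1 : ℤ), q1 - 1)) ↔ (i = q1) := by
      intro i
      simp only [Prod.mk.injEq]
      omega
    simp only [he]
    rw [Finset.sum_ite_eq']
    simp only [W]
    by_cases hi : q1 ∈ Finset.Icc (0 : ℤ) ((i₀ : ℤ) + n)
    · simp [hi]
    · have hi' := hi
      rw [Finset.mem_Icc] at hi'
      have h0 : walkCount S cone (start i₀) n (q1, q1 - 1) = 0 := by
        rcases (by omega : q1 < 0 ∨ (i₀ : ℤ) + n < q1) with h | h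
        · exact walkCount_not_cone' (by simpa) (by simp; omega)
        · exact walkCount_not_box hS (by simp; omega)
      simp [hi, h0]
  · rw [if_neg (by simpa using hd)]
    apply Finset.sum_eq_zero
    intro i _
    rw [if_neg]
    simp only [Prod.mk.injEq, not_and]
    intro h1 h2
    omega

lemma coeff_L0minus (hS : S ⊆ (Finset.Icc (-1, -1) (1, 1)).erase (0, 0)) (n : ℕ) (q : ℤ × ℤ) :
    (PowerSeries.coeff n (L0minus S i₀)).coeff q =
      if q.1 = 0 ∧ q.2 ≤ -1 then W S i₀ n q else 0 := by
  rw [L0minus, PowerSeries.coeff_mk]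
  simp only [cast_mul_mono]
  rw [AddMonoidAlgebra.coeff_sum, Finsupp.finset_sum_apply]
  simp only [AddMonoidAlgebra.coeff_single, Finsupp.single_apply]
  obtain ⟨q1, q2⟩ := q
  by_cases hd : q1 = 0 ∧ q2 ≤ -1
  · obtain ⟨h1, h2⟩ := hd
    subst h1
    simp only [Prod.mk.injEq, true_and]
    rw [Finset.sum_ite_eq']
    simp only [W]
    by_cases hi : q2 ∈ Finset.Icc ((i₀ : ℤ) - n) (-1)
    · simp [hi, h2]
    · have hi' := hi
      rw [Finset.mem_Icc] at hi'
      have h0 : walkCount S cone (start i₀) n (0, q2) = 0 :=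
        walkCount_not_box hS (by simp; omega)
      simp [hi, h0]
  · rw [if_neg hd]
    apply Finset.sum_eq_zero
    intro j hj
    rw [Finset.mem_Icc] at hj
    rw [if_neg]
    simp only [Prod.mk.injEq, not_and]
    intro h1 h2
    exact hd (by constructor <;> omega)

lemma coeff_C0m1 (n : ℕ) :
    (PowerSeries.coeff n (C0m1 S i₀)) = ((walkCount S cone (start i₀) n (0, -1) : LP)) := by
  rw [C0m1, PowerSeries.coeff_mk]

end Eval

section Key

variable {S : Finset (ℤ × ℤ)} {i₀ : ℕ}

lemma key (hS : S ⊆ (Finset.Icc (-1, -1) (1, 1)).erase (0, 0))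
    (hm : ((-1 : ℤ), (1 : ℤ)) ∉ S) (hp : ((1 : ℤ), (-1 : ℤ)) ∉ S)
    (m : ℕ) (q : ℤ × ℤ) :
    (if 0 ≤ q.1 ∧ q.2 ≤ q.1 - 1 then W S i₀ (m+1) q else 0)
    = (∑ s ∈ S, if 0 ≤ (q-s).1 ∧ (q-s).2 ≤ (q-s).1 - 1 then W S i₀ m (q-s) else 0)
    + ((if ((1:ℤ),(0:ℤ)) ∈ S then (if (q-((1:ℤ),(0:ℤ))).2 = (q-((1:ℤ),(0:ℤ))).1 then W S i₀ m (q-((1:ℤ),(0:ℤ))) else 0) else 0)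
      + (if ((0:ℤ),(-1:ℤ)) ∈ S then (if (q-((0:ℤ),(-1:ℤ))).2 = (q-((0:ℤ),(-1:ℤ))).1 then W S i₀ m (q-((0:ℤ),(-1:ℤ))) else 0) else 0))
    - ((if ((-1:ℤ),(0:ℤ)) ∈ S then (if (q-((-1:ℤ),(0:ℤ))).2 = (q-((-1:ℤ),(0:ℤ))).1 - 1 then W S i₀ m (q-((-1:ℤ),(0:ℤ))) else 0) else 0)
      + (if ((0:ℤ),(1:ℤ)) ∈ S then (if (q-((0:ℤ),(1:ℤ))).2 = (q-((0:ℤ),(1:ℤ))).1 - 1 then W S i₀ m (q-((0:ℤ),(1:ℤ))) else 0) else 0))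
    - ((if ((-1:ℤ),(0:ℤ)) ∈ S then (if (q-((-1:ℤ),(0:ℤ))).1 = 0 ∧ (q-((-1:ℤ),(0:ℤ))).2 ≤ -1 then W S i₀ m (q-((-1:ℤ),(0:ℤ))) else 0) else 0)
      + (if ((-1:ℤ),(-1:ℤ)) ∈ S then (if (q-((-1:ℤ),(-1:ℤ))).1 = 0 ∧ (q-((-1:ℤ),(-1:ℤ))).2 ≤ -1 then W S i₀ m (q-((-1:ℤ),(-1:ℤ))) else 0) else 0))
    + (if ((-1:ℤ),(0:ℤ)) ∈ S then (if ((-1:ℤ),(-1:ℤ)) = q then W S i₀ m (0,-1) else 0) else 0) := by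
  have WZ : ∀ x y : ℤ, x < 0 → y < 0 → W S i₀ m (x, y) = 0 := fun x y h1 h2 => by
    rw [W, walkCount_not_cone' h1 h2, Nat.cast_zero]
  have hL : (if 0 ≤ q.1 ∧ q.2 ≤ q.1 - 1 then W S i₀ (m+1) q else 0)
      = ∑ s ∈ S, (if 0 ≤ q.1 ∧ q.2 ≤ q.1 - 1 then W S i₀ m (q - s) else 0) := by
    by_cases hq : 0 ≤ q.1 ∧ q.2 ≤ q.1 - 1
    · simp only [if_pos hq, W, walkCount_succ hS (show q ∈ cone from Or.inl hq.1), Nat.cast_sum]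
    · simp only [if_neg hq, Finset.sum_const_zero]
  rw [hL]
  rw [← Finset.sum_ite_eq' S ((1:ℤ),(0:ℤ)) (fun _ => (if (q-((1:ℤ),(0:ℤ))).2 = (q-((1:ℤ),(0:ℤ))).1 then W S i₀ m (q-((1:ℤ),(0:ℤ))) else 0))]
  rw [← Finset.sum_ite_eq' S ((0:ℤ),(-1:ℤ)) (fun _ => (if (q-((0:ℤ),(-1:ℤ))).2 = (q-((0:ℤ),(-1:ℤ))).1 then W S i₀ m (q-((0:ℤ),(-1:ℤ))) else 0))]
  rw [← Finset.sum_ite_eq' S ((-1:ℤ),(0:ℤ)) (fun _ => (if (q-((-1:ℤ),(0:ℤ))).2 = (q-((-1:ℤ),(0:ℤ))).1 - 1 then W S i₀ m (q-((-1:ℤ),(0:ℤ))) else 0))]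
  rw [← Finset.sum_ite_eq' S ((0:ℤ),(1:ℤ)) (fun _ => (if (q-((0:ℤ),(1:ℤ))).2 = (q-((0:ℤ),(1:ℤ))).1 - 1 then W S i₀ m (q-((0:ℤ),(1:ℤ))) else 0))]
  rw [← Finset.sum_ite_eq' S ((-1:ℤ),(0:ℤ)) (fun _ => (if (q-((-1:ℤ),(0:ℤ))).1 = 0 ∧ (q-((-1:ℤ),(0:ℤ))).2 ≤ -1 then W S i₀ m (q-((-1:ℤ),(0:ℤ))) else 0))]
  rw [← Finset.sum_ite_eq' S ((-1:ℤ),(-1:ℤ)) (fun _ => (if (q-((-1:ℤ),(-1:ℤ))).1 = 0 ∧ (q-((-1:ℤ),(-1:ℤ))).2 ≤ -1 then W S i₀ m (q-((-1:ℤ),(-1:ℤ))) else 0))]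
  rw [← Finset.sum_ite_eq' S ((-1:ℤ),(0:ℤ)) (fun _ => (if ((-1:ℤ),(-1:ℤ)) = q then W S i₀ m (0,-1) else 0))]
  simp only [← Finset.sum_sub_distrib, ← Finset.sum_add_distrib]
  refine Finset.sum_congr rfl fun s hs => ?_
  have hbound := hS hs
  rw [Finset.mem_erase, Finset.mem_Icc] at hbound
  obtain ⟨hne, hlo, hhi⟩ := hbound
  have hsm : s ≠ ((-1:ℤ),(1:ℤ)) := fun h => hm (h ▸ hs)
  have hsp : s ≠ ((1:ℤ),(-1:ℤ)) := fun h => hp (h ▸ hs)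
  obtain ⟨a, b⟩ := s
  obtain ⟨q1, q2⟩ := q
  rw [Prod.le_def] at hlo hhi
  obtain ⟨hlo1, hlo2⟩ := hlo
  obtain ⟨hhi1, hhi2⟩ := hhi
  simp only at hlo1 hlo2 hhi1 hhi2
  interval_cases a <;> interval_cases b <;>
    first
      | (exact absurd rfl hne)
      | (exact absurd rfl hsm)
      | (exact absurd rfl hsp)
      | (simp only [Prod.mk_sub_mk, Prod.mk.injEq]
         norm_num
         split_ifs <;>
           first
             | rfl
             | ring1
             | omega
             | (exfalso; omega)
             | (exact WZ _ _ (by omega) (by omega))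
             | (exact (WZ _ _ (by omega) (by omega)).symm)
             | (rw [WZ _ _ (by omega) (by omega)]; ring1)
             | (rename_i h'; obtain ⟨e1, e2⟩ := h'
                rw [show ((q1 + 1 : ℤ), q2) = ((0 : ℤ), (-1 : ℤ)) from by rw [← e1, ← e2]; norm_num]
                ring1)
             | skip)

end Key

section Main

variable {S : Finset (ℤ × ℤ)} {i₀ : ℕ}

lemma lp_add_apply (f g : LP) (q : ℤ × ℤ) : (f + g).coeff q = f.coeff q + g.coeff q := Finsupp.add_apply _ _ _
lemma lp_sub_apply (f g : LP) (q : ℤ × ℤ) : (f - g).coeff q = f.coeff q - g.coeff q := Finsupp.sub_apply _ _ _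
lemma lp_sum_apply (s : Finset (ℤ × ℤ)) (f : ℤ × ℤ → LP) (q : ℤ × ℤ) :
    (∑ i ∈ s, f i).coeff q = ∑ i ∈ s, (f i).coeff q := by
  rw [AddMonoidAlgebra.coeff_sum, Finsupp.finset_sum_apply]
lemma lp_single_apply (p q : ℤ × ℤ) (a : ℚ) :
    (AddMonoidAlgebra.single p a : LP).coeff q = if p = q then a else 0 := Finsupp.single_apply

lemma mono_mul_cast (v : ℤ × ℤ) (k : ℕ) :
    mono v * ((k : LP)) = AddMonoidAlgebra.single v (k : ℚ) := by
  rw [AddMonoidAlgebra.natCast_def, mono, AddMonoidAlgebra.single_mul_single, add_zero, one_mul]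

lemma ite_apply0 (P : Prop) [Decidable P] (x : LP) (q : ℤ × ℤ) :
    (if P then x else 0).coeff q = if P then x.coeff q else 0 := by
  split_ifs <;> simp

lemma mono_mul_apply (v : ℤ × ℤ) (f : LP) (y : ℤ × ℤ) :
    (mono v * f).coeff y = f.coeff (y - v) := by
  rw [mono, AddMonoidAlgebra.coeff_single_mul_apply, one_mul, neg_add_eq_sub]

lemma coeff_zero_Lhat (hS : S ⊆ (Finset.Icc (-1, -1) (1, 1)).erase (0, 0)) :
    (PowerSeries.coeff 0) (Lhat S i₀) = 0 := by
  apply AddMonoidAlgebra.ext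
  apply Finsupp.ext
  intro q
  rw [coeff_Lhat hS, AddMonoidAlgebra.coeff_zero, Finsupp.coe_zero, Pi.zero_apply]
  split_ifs with h
  · rw [W, walkCount_not_box hS (n := 0) (by push_cast; omega), Nat.cast_zero]
  · rfl

theorem construction_equation_lower_part'
    (hS : S ⊆ (Finset.Icc (-1, -1) (1, 1)).erase (0, 0))
    (hm : ((-1 : ℤ), (1 : ℤ)) ∉ S) (hp : ((1 : ℤ), (-1 : ℤ)) ∉ S) :
    Lhat S i₀ =
      T * CL (∑ s ∈ S, mono s) * Lhat S i₀ +
      T * (dl S (1, 0) * CL (mono (1, 0)) + dl S (0, -1) * CL (mono (0, -1))) * Dhat S i₀ -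
      T * (dl S (-1, 0) * CL (mono (-1, 0)) + dl S (0, 1) * CL (mono (0, 1))) * Dlow S i₀ -
      T * (dl S (-1, 0) * CL (mono (-1, 0)) + dl S (-1, -1) * CL (mono (-1, -1))) *
        L0minus S i₀ +
      T * dl S (-1, 0) * CL (mono (-1, -1)) * C0m1 S i₀ := by
  have hLP : ∀ v : ℤ × ℤ, dl S v = CL (if v ∈ S then (1 : LP) else 0) := by
    intro v; rw [dl]; split_ifs <;> simp [CL]
  have e1 : T * CL (∑ s ∈ S, mono s) * Lhat S i₀ =
      PowerSeries.X * (CL (∑ s ∈ S, mono s) * Lhat S i₀) := by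
    rw [T, mul_assoc]
  have e2 : T * (dl S (1, 0) * CL (mono (1, 0)) + dl S (0, -1) * CL (mono (0, -1))) * Dhat S i₀ =
      PowerSeries.X * (CL ((if ((1:ℤ),(0:ℤ)) ∈ S then 1 else 0) * mono (1, 0) +
        (if ((0:ℤ),(-1:ℤ)) ∈ S then 1 else 0) * mono (0, -1)) * Dhat S i₀) := by
    rw [T, mul_assoc, hLP, hLP, map_add, map_mul, map_mul]
  have e3 : T * (dl S (-1, 0) * CL (mono (-1, 0)) + dl S (0, 1) * CL (mono (0, 1))) * Dlow S i₀ =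
      PowerSeries.X * (CL ((if ((-1:ℤ),(0:ℤ)) ∈ S then 1 else 0) * mono (-1, 0) +
        (if ((0:ℤ),(1:ℤ)) ∈ S then 1 else 0) * mono (0, 1)) * Dlow S i₀) := by
    rw [T, mul_assoc, hLP, hLP, map_add, map_mul, map_mul]
  have e4 : T * (dl S (-1, 0) * CL (mono (-1, 0)) + dl S (-1, -1) * CL (mono (-1, -1))) *
        L0minus S i₀ =
      PowerSeries.X * (CL ((if ((-1:ℤ),(0:ℤ)) ∈ S then 1 else 0) * mono (-1, 0) +
        (if ((-1:ℤ),(-1:ℤ)) ∈ S then 1 else 0) * mono (-1, -1)) * L0minus S i₀) := by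
    rw [T, mul_assoc, hLP, hLP, map_add, map_mul, map_mul]
  have e5 : T * dl S (-1, 0) * CL (mono (-1, -1)) * C0m1 S i₀ =
      PowerSeries.X * (CL ((if ((-1:ℤ),(0:ℤ)) ∈ S then 1 else 0) * mono (-1, -1)) * C0m1 S i₀) := by
    rw [T, hLP, map_mul]; ring
  rw [e1, e2, e3, e4, e5]
  apply PowerSeries.ext
  intro n
  cases n with
  | zero =>
    simp only [map_add, map_sub, PowerSeries.coeff_zero_eq_constantCoeff, map_mul,
      PowerSeries.constantCoeff_X, zero_mul]
    rw [← PowerSeries.coeff_zero_eq_constantCoeff, coeff_zero_Lhat hS]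
    ring
  | succ m =>
    simp only [map_add, map_sub, PowerSeries.coeff_succ_X_mul, CL, PowerSeries.coeff_C_mul]
    apply AddMonoidAlgebra.ext
    apply Finsupp.ext
    intro q
    simp only [lp_add_apply, lp_sub_apply]
    rw [coeff_C0m1]
    simp only [map_add, PowerSeries.coeff_C_mul, Finset.sum_mul, add_mul, mul_assoc,
      boole_mul, ite_mul, zero_mul, one_mul, mono_mul_cast,
      lp_sum_apply, ite_apply0, lp_add_apply, mono_mul_apply, lp_single_apply,
      coeff_Lhat hS, coeff_Dhat hS, coeff_Dlow hS, coeff_L0minus hS]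
    exact key hS hm hp m q

end Main


/-- The step-by-step construction equation for the lower-part generating function `L̂`,
for a symmetric model (Hypothesis (H)) started at the diagonal point `(i₀, i₀)`. -/
theorem construction_equation_lower_part
    (S : Finset (ℤ × ℤ)) (hS : S ⊆ (Finset.Icc (-1, -1) (1, 1)).erase (0, 0))
    (hsym : ∀ s ∈ S, (s.2, s.1) ∈ S)
    (hm : ((-1 : ℤ), (1 : ℤ)) ∉ S) (hp : ((1 : ℤ), (-1 : ℤ)) ∉ S)
    (i₀ : ℕ) :
    Lhat S i₀ =
      T * CL (∑ s ∈ S, mono s) * Lhat S i₀ +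
      T * (dl S (1, 0) * CL (mono (1, 0)) + dl S (0, -1) * CL (mono (0, -1))) * Dhat S i₀ -
      T * (dl S (-1, 0) * CL (mono (-1, 0)) + dl S (0, 1) * CL (mono (0, 1))) * Dlow S i₀ -
      T * (dl S (-1, 0) * CL (mono (-1, 0)) + dl S (-1, -1) * CL (mono (-1, -1))) *
        L0minus S i₀ +
      T * dl S (-1, 0) * CL (mono (-1, -1)) * C0m1 S i₀ := by
  exact construction_equation_lower_part' (i₀ := i₀) hS hm hp
end

section
/- Let S ⊆ {−1,0,1}² ∖ {(0,0)} be any step set, fix t ∈ ℂ, and let K be its kernel with discriminants d and d̃. Let U ⊆ ℂ be an open set and Y : U → ℂ a holomorphic function such that K(x, Y(x)) = 0 for all x ∈ U. Then d(x)·Y′(x)² = d̃(Y(x)) for all x ∈ U. -/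
open scoped BigOperators

/-- `a(x) = t x ∑_{(i,1) ∈ S} x^i`, evaluated at complex `t, x`
(written polynomially: for small steps `x·x^i = x^{i+1}` has nonnegative exponent). -/
noncomputable def aC (S : Finset (ℤ × ℤ)) (t x : ℂ) : ℂ :=
  t * ∑ s ∈ S.filter (fun s => s.2 = 1), x ^ (s.1 + 1).toNat

/-- `b(x) = t x ∑_{(i,0) ∈ S} x^i - x`. -/
noncomputable def bC (S : Finset (ℤ × ℤ)) (t x : ℂ) : ℂ :=
  t * ∑ s ∈ S.filter (fun s => s.2 = 0), x ^ (s.1 + 1).toNat - x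

/-- `c(x) = t x ∑_{(i,-1) ∈ S} x^i`. -/
noncomputable def cC (S : Finset (ℤ × ℤ)) (t x : ℂ) : ℂ :=
  t * ∑ s ∈ S.filter (fun s => s.2 = -1), x ^ (s.1 + 1).toNat

/-- `ã(y) = t y ∑_{(1,j) ∈ S} y^j`. -/
noncomputable def aTC (S : Finset (ℤ × ℤ)) (t y : ℂ) : ℂ :=
  t * ∑ s ∈ S.filter (fun s => s.1 = 1), y ^ (s.2 + 1).toNat

/-- `b̃(y) = t y ∑_{(0,j) ∈ S} y^j - y`. -/
noncomputable def bTC (S : Finset (ℤ × ℤ)) (t y : ℂ) : ℂ :=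
  t * ∑ s ∈ S.filter (fun s => s.1 = 0), y ^ (s.2 + 1).toNat - y

/-- `c̃(y) = t y ∑_{(-1,j) ∈ S} y^j`. -/
noncomputable def cTC (S : Finset (ℤ × ℤ)) (t y : ℂ) : ℂ :=
  t * ∑ s ∈ S.filter (fun s => s.1 = -1), y ^ (s.2 + 1).toNat

/-- The discriminant `d(x) = b(x)² - 4 a(x) c(x)`. -/
noncomputable def dC (S : Finset (ℤ × ℤ)) (t x : ℂ) : ℂ :=
  bC S t x ^ 2 - 4 * aC S t x * cC S t x

/-- The discriminant `d̃(y) = b̃(y)² - 4 ã(y) c̃(y)`. -/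
noncomputable def dTC (S : Finset (ℤ × ℤ)) (t y : ℂ) : ℂ :=
  bTC S t y ^ 2 - 4 * aTC S t y * cTC S t y

lemma sum_split (S : Finset (ℤ × ℤ)) (g : ℤ × ℤ → ℤ)
    (hg : ∀ s ∈ S, g s = -1 ∨ g s = 0 ∨ g s = 1) (f : ℤ × ℤ → ℂ) :
    ∑ s ∈ S, f s = (∑ s ∈ S.filter (fun s => g s = 1), f s)
      + (∑ s ∈ S.filter (fun s => g s = 0), f s)
      + (∑ s ∈ S.filter (fun s => g s = -1), f s) := by
  rw [← Finset.sum_filter_add_sum_filter_not S (fun s => g s = 1) f,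
      ← Finset.sum_filter_add_sum_filter_not (S.filter (fun s => ¬ g s = 1)) (fun s => g s = 0) f,
      Finset.filter_filter, Finset.filter_filter]
  have h1 : S.filter (fun s => ¬ g s = 1 ∧ g s = 0) = S.filter (fun s => g s = 0) :=
    Finset.filter_congr (fun s hs => by omega)
  have h2 : S.filter (fun s => ¬ g s = 1 ∧ ¬ g s = 0) = S.filter (fun s => g s = -1) :=
    Finset.filter_congr (fun s hs => by have := hg s hs; omega)
  rw [h1, h2]; ring

section idents
variable (S : Finset (ℤ × ℤ))

lemma identA (h2 : ∀ s ∈ S, s.2 = -1 ∨ s.2 = 0 ∨ s.2 = 1) (t x y : ℂ) :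
    t * ∑ s ∈ S, x ^ (s.1 + 1).toNat * y ^ (s.2 + 1).toNat
      = aC S t x * y ^ 2 + (bC S t x + x) * y + cC S t x := by
  rw [sum_split S (fun s => s.2) h2]
  have e1 : ∑ s ∈ S.filter (fun s => s.2 = 1), x ^ (s.1 + 1).toNat * y ^ (s.2 + 1).toNat
      = (∑ s ∈ S.filter (fun s => s.2 = 1), x ^ (s.1 + 1).toNat) * y ^ 2 := by
    rw [Finset.sum_mul]
    refine Finset.sum_congr rfl fun s hs => ?_
    have := (Finset.mem_filter.mp hs).2
    have hn : (s.2 + 1).toNat = 2 := by omega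
    rw [hn]
  have e0 : ∑ s ∈ S.filter (fun s => s.2 = 0), x ^ (s.1 + 1).toNat * y ^ (s.2 + 1).toNat
      = (∑ s ∈ S.filter (fun s => s.2 = 0), x ^ (s.1 + 1).toNat) * y := by
    rw [Finset.sum_mul]
    refine Finset.sum_congr rfl fun s hs => ?_
    have := (Finset.mem_filter.mp hs).2
    have hn : (s.2 + 1).toNat = 1 := by omega
    rw [hn, pow_one]
  have em : ∑ s ∈ S.filter (fun s => s.2 = -1), x ^ (s.1 + 1).toNat * y ^ (s.2 + 1).toNat
      = (∑ s ∈ S.filter (fun s => s.2 = -1), x ^ (s.1 + 1).toNat) := by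
    refine Finset.sum_congr rfl fun s hs => ?_
    have := (Finset.mem_filter.mp hs).2
    have hn : (s.2 + 1).toNat = 0 := by omega
    rw [hn, pow_zero, mul_one]
  rw [e1, e0, em]
  simp only [aC, bC, cC]; ring

lemma identB (h1 : ∀ s ∈ S, s.1 = -1 ∨ s.1 = 0 ∨ s.1 = 1) (t x y : ℂ) :
    t * ∑ s ∈ S, x ^ (s.1 + 1).toNat * y ^ (s.2 + 1).toNat
      = aTC S t y * x ^ 2 + (bTC S t y + y) * x + cTC S t y := by
  rw [sum_split S (fun s => s.1) h1]
  have e1 : ∑ s ∈ S.filter (fun s => s.1 = 1), x ^ (s.1 + 1).toNat * y ^ (s.2 + 1).toNat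
      = (∑ s ∈ S.filter (fun s => s.1 = 1), y ^ (s.2 + 1).toNat) * x ^ 2 := by
    rw [Finset.sum_mul]
    refine Finset.sum_congr rfl fun s hs => ?_
    have := (Finset.mem_filter.mp hs).2
    have hn : (s.1 + 1).toNat = 2 := by omega
    rw [hn]; ring
  have e0 : ∑ s ∈ S.filter (fun s => s.1 = 0), x ^ (s.1 + 1).toNat * y ^ (s.2 + 1).toNat
      = (∑ s ∈ S.filter (fun s => s.1 = 0), y ^ (s.2 + 1).toNat) * x := by
    rw [Finset.sum_mul]
    refine Finset.sum_congr rfl fun s hs => ?_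
    have := (Finset.mem_filter.mp hs).2
    have hn : (s.1 + 1).toNat = 1 := by omega
    rw [hn, pow_one]; ring
  have em : ∑ s ∈ S.filter (fun s => s.1 = -1), x ^ (s.1 + 1).toNat * y ^ (s.2 + 1).toNat
      = (∑ s ∈ S.filter (fun s => s.1 = -1), y ^ (s.2 + 1).toNat) := by
    refine Finset.sum_congr rfl fun s hs => ?_
    have := (Finset.mem_filter.mp hs).2
    have hn : (s.1 + 1).toNat = 0 := by omega
    rw [hn, pow_zero, one_mul]
  rw [e1, e0, em]
  simp only [aTC, bTC, cTC]; ring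

lemma identC (h1 : ∀ s ∈ S, s.1 = -1 ∨ s.1 = 0 ∨ s.1 = 1) (t x y : ℂ) :
    t * ∑ s ∈ S, ((s.1 + 1).toNat : ℂ) * x ^ ((s.1 + 1).toNat - 1) * y ^ (s.2 + 1).toNat
      = 2 * aTC S t y * x + (bTC S t y + y) := by
  rw [sum_split S (fun s => s.1) h1]
  have e1 : ∑ s ∈ S.filter (fun s => s.1 = 1), ((s.1 + 1).toNat : ℂ) * x ^ ((s.1 + 1).toNat - 1) * y ^ (s.2 + 1).toNat
      = (∑ s ∈ S.filter (fun s => s.1 = 1), y ^ (s.2 + 1).toNat) * (2 * x) := by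
    rw [Finset.sum_mul]
    refine Finset.sum_congr rfl fun s hs => ?_
    have := (Finset.mem_filter.mp hs).2
    have hn : (s.1 + 1).toNat = 2 := by omega
    rw [hn]; push_cast; ring
  have e0 : ∑ s ∈ S.filter (fun s => s.1 = 0), ((s.1 + 1).toNat : ℂ) * x ^ ((s.1 + 1).toNat - 1) * y ^ (s.2 + 1).toNat
      = (∑ s ∈ S.filter (fun s => s.1 = 0), y ^ (s.2 + 1).toNat) := by
    refine Finset.sum_congr rfl fun s hs => ?_
    have := (Finset.mem_filter.mp hs).2
    have hn : (s.1 + 1).toNat = 1 := by omega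
    rw [hn]; push_cast; ring
  have em : ∑ s ∈ S.filter (fun s => s.1 = -1), ((s.1 + 1).toNat : ℂ) * x ^ ((s.1 + 1).toNat - 1) * y ^ (s.2 + 1).toNat
      = 0 := by
    refine Finset.sum_eq_zero fun s hs => ?_
    have := (Finset.mem_filter.mp hs).2
    have hn : (s.1 + 1).toNat = 0 := by omega
    rw [hn]; push_cast; ring
  rw [e1, e0, em]
  simp only [aTC, bTC]; ring

lemma identD (h2 : ∀ s ∈ S, s.2 = -1 ∨ s.2 = 0 ∨ s.2 = 1) (t x y : ℂ) :
    t * ∑ s ∈ S, x ^ (s.1 + 1).toNat * (((s.2 + 1).toNat : ℂ) * y ^ ((s.2 + 1).toNat - 1))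
      = 2 * aC S t x * y + (bC S t x + x) := by
  rw [sum_split S (fun s => s.2) h2]
  have e1 : ∑ s ∈ S.filter (fun s => s.2 = 1), x ^ (s.1 + 1).toNat * (((s.2 + 1).toNat : ℂ) * y ^ ((s.2 + 1).toNat - 1))
      = (∑ s ∈ S.filter (fun s => s.2 = 1), x ^ (s.1 + 1).toNat) * (2 * y) := by
    rw [Finset.sum_mul]
    refine Finset.sum_congr rfl fun s hs => ?_
    have := (Finset.mem_filter.mp hs).2
    have hn : (s.2 + 1).toNat = 2 := by omega
    rw [hn]; push_cast; ring
  have e0 : ∑ s ∈ S.filter (fun s => s.2 = 0), x ^ (s.1 + 1).toNat * (((s.2 + 1).toNat : ℂ) * y ^ ((s.2 + 1).toNat - 1))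
      = (∑ s ∈ S.filter (fun s => s.2 = 0), x ^ (s.1 + 1).toNat) := by
    refine Finset.sum_congr rfl fun s hs => ?_
    have := (Finset.mem_filter.mp hs).2
    have hn : (s.2 + 1).toNat = 1 := by omega
    rw [hn]; push_cast; ring
  have em : ∑ s ∈ S.filter (fun s => s.2 = -1), x ^ (s.1 + 1).toNat * (((s.2 + 1).toNat : ℂ) * y ^ ((s.2 + 1).toNat - 1))
      = 0 := by
    refine Finset.sum_eq_zero fun s hs => ?_
    have := (Finset.mem_filter.mp hs).2
    have hn : (s.2 + 1).toNat = 0 := by omega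
    rw [hn]; push_cast; ring
  rw [e1, e0, em]
  simp only [aC, bC]; ring

end idents

/-- If `Y` is holomorphic on an open set `U` and `K(x, Y(x)) = 0` on `U`, then
`d(x) Y'(x)² = d̃(Y(x))` on `U`. -/
theorem discriminant_differential_identity
    (S : Finset (ℤ × ℤ)) (hS : S ⊆ (Finset.Icc (-1, -1) (1, 1)).erase (0, 0))
    (t : ℂ) (U : Set ℂ) (hU : IsOpen U) (Y : ℂ → ℂ)
    (hY : DifferentiableOn ℂ Y U)
    (hK : ∀ x ∈ U, aC S t x * Y x ^ 2 + bC S t x * Y x + cC S t x = 0) :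
    ∀ x ∈ U, dC S t x * (deriv Y x) ^ 2 = dTC S t (Y x) := by
  have hrange : ∀ s ∈ S, (s.1 = -1 ∨ s.1 = 0 ∨ s.1 = 1) ∧ (s.2 = -1 ∨ s.2 = 0 ∨ s.2 = 1) := by
    intro s hs
    have h := hS hs
    rw [Finset.mem_erase, Finset.mem_Icc, Prod.le_def, Prod.le_def] at h
    obtain ⟨-, ⟨ha1, ha2⟩, hb1, hb2⟩ := h
    simp only at ha1 ha2 hb1 hb2
    omega
  have h1 : ∀ s ∈ S, s.1 = -1 ∨ s.1 = 0 ∨ s.1 = 1 := fun s hs => (hrange s hs).1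
  have h2 : ∀ s ∈ S, s.2 = -1 ∨ s.2 = 0 ∨ s.2 = 1 := fun s hs => (hrange s hs).2
  intro x₀ hx₀
  have hYd : DifferentiableAt ℂ Y x₀ := hY.differentiableAt (hU.mem_nhds hx₀)
  set yv := Y x₀ with hyv
  set y' := deriv Y x₀ with hy'
  have hYD : HasDerivAt Y y' x₀ := hYd.hasDerivAt
  -- the kernel function along the curve
  set g : ℂ → ℂ := fun x => t * ∑ s ∈ S, x ^ (s.1 + 1).toNat * Y x ^ (s.2 + 1).toNat - x * Y x with hg
  have hg0 : ∀ x ∈ U, g x = 0 := by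
    intro x hx
    have hA := identA S h2 t x (Y x)
    have hKx := hK x hx
    simp only [hg]
    linear_combination hA + hKx
  -- derivative of g at x₀
  have key : HasDerivAt g
      (t * ∑ s ∈ S, (((s.1 + 1).toNat : ℂ) * x₀ ^ ((s.1 + 1).toNat - 1) * yv ^ (s.2 + 1).toNat
        + x₀ ^ (s.1 + 1).toNat * (((s.2 + 1).toNat : ℂ) * yv ^ ((s.2 + 1).toNat - 1) * y'))
        - (1 * yv + x₀ * y')) x₀ := by
    refine HasDerivAt.sub ?_ ((hasDerivAt_id x₀).mul hYD)
    refine HasDerivAt.const_mul t ?_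
    refine HasDerivAt.fun_sum fun s hs => ?_
    exact (hasDerivAt_pow _ x₀).mul (hYD.pow _)
  have hzero : HasDerivAt g 0 x₀ := by
    refine (hasDerivAt_const x₀ (0 : ℂ)).congr_of_eventuallyEq ?_
    filter_upwards [hU.mem_nhds hx₀] with x hx using hg0 x hx
  have hder := key.unique hzero
  -- split the derivative sum
  have hsum : ∑ s ∈ S, (((s.1 + 1).toNat : ℂ) * x₀ ^ ((s.1 + 1).toNat - 1) * yv ^ (s.2 + 1).toNat
        + x₀ ^ (s.1 + 1).toNat * (((s.2 + 1).toNat : ℂ) * yv ^ ((s.2 + 1).toNat - 1) * y'))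
      = (∑ s ∈ S, ((s.1 + 1).toNat : ℂ) * x₀ ^ ((s.1 + 1).toNat - 1) * yv ^ (s.2 + 1).toNat)
        + (∑ s ∈ S, x₀ ^ (s.1 + 1).toNat * (((s.2 + 1).toNat : ℂ) * yv ^ ((s.2 + 1).toNat - 1))) * y' := by
    rw [Finset.sum_add_distrib, Finset.sum_mul]
    congr 1
    exact Finset.sum_congr rfl fun s _ => by ring
  rw [hsum] at hder
  have hC := identC S h1 t x₀ yv
  have hD := identD S h2 t x₀ yv
  -- the differentiated kernel relation
  have e3 : (2 * aC S t x₀ * yv + bC S t x₀) * y' + (2 * aTC S t yv * x₀ + bTC S t yv) = 0 := by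
    linear_combination hder - hC - y' * hD
  have e1 : aC S t x₀ * yv ^ 2 + bC S t x₀ * yv + cC S t x₀ = 0 := hK x₀ hx₀
  have e2 : aTC S t yv * x₀ ^ 2 + bTC S t yv * x₀ + cTC S t yv = 0 := by
    have hA := identA S h2 t x₀ yv
    have hB := identB S h1 t x₀ yv
    linear_combination e1 + hA - hB
  simp only [dC, dTC]
  linear_combination ((2 * aC S t x₀ * yv + bC S t x₀) * y' - (2 * aTC S t yv * x₀ + bTC S t yv)) * e3
    - 4 * aC S t x₀ * y' ^ 2 * e1 + 4 * aTC S t yv * e2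
end

section
/- Consider Gessel's step set S = {(1,0),(−1,0),(1,1),(−1,−1)}, whose kernel is K(x,y) = xy(t(x + x^{−1} + xy + x^{−1}y^{−1}) − 1), i.e. as a quadratic in y: K(x,y) = tx²·y² + (t(x²+1) − x)·y + t. Let t, x ∈ ℂ ∖ {0} and let y₀, y₁ ∈ ℂ be the two roots of K(x,·) = 0, i.e. y₀·y₁ = 1/x² and y₀ + y₁ = (x − t(x²+1))/(tx²). Then y₀, y₁ ∉ {0, −1} and g(y₀)·g(y₁) = 1, where g(y) = y/(t(y+1)²). -/
/-- Anti-Tutte invariant for Gessel's model: if `y₀, y₁` are the two roots of the kernel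
`K(x,·) = tx²y² + (t(x²+1) - x)y + t` (given via Vieta's formulas), then
`g(y₀) g(y₁) = 1` where `g(y) = y / (t (y+1)²)`; in particular `y₀, y₁ ∉ {0, -1}`. -/
theorem gessel_anti_tutte_invariant
    (t x y₀ y₁ : ℂ) (ht : t ≠ 0) (hx : x ≠ 0)
    (hprod : y₀ * y₁ = 1 / x ^ 2)
    (hsum : y₀ + y₁ = (x - t * (x ^ 2 + 1)) / (t * x ^ 2)) :
    y₀ ≠ 0 ∧ y₀ ≠ -1 ∧ y₁ ≠ 0 ∧ y₁ ≠ -1 ∧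
      (y₀ / (t * (y₀ + 1) ^ 2)) * (y₁ / (t * (y₁ + 1) ^ 2)) = 1 := by
  have hx2 : x ^ 2 ≠ 0 := pow_ne_zero 2 hx
  have hpne : y₀ * y₁ ≠ 0 := by rw [hprod]; exact one_div_ne_zero hx2
  have hy0 : y₀ ≠ 0 := left_ne_zero_of_mul hpne
  have hy1 : y₁ ≠ 0 := right_ne_zero_of_mul hpne
  have hs : (y₀ + 1) * (y₁ + 1) = 1 / (t * x) := by
    have : (y₀ + 1) * (y₁ + 1) = y₀ * y₁ + (y₀ + y₁) + 1 := by ring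
    rw [this, hprod, hsum]
    field_simp
    ring
  have hsne : (y₀ + 1) * (y₁ + 1) ≠ 0 := by
    rw [hs]; exact one_div_ne_zero (mul_ne_zero ht hx)
  have hy0' : y₀ + 1 ≠ 0 := left_ne_zero_of_mul hsne
  have hy1' : y₁ + 1 ≠ 0 := right_ne_zero_of_mul hsne
  refine ⟨hy0, fun h => hy0' (by rw [h]; ring), hy1, fun h => hy1' (by rw [h]; ring), ?_⟩
  have key : (y₀ / (t * (y₀ + 1) ^ 2)) * (y₁ / (t * (y₁ + 1) ^ 2))
      = (y₀ * y₁) / (t ^ 2 * ((y₀ + 1) * (y₁ + 1)) ^ 2) := by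
    field_simp
  rw [key, hprod, hs]
  field_simp
end

section
/- Let F be a field of characteristic zero and let t, W ∈ F with t ≠ 0, W ≠ 0 and W = t·(2 + W³). Then the Kreweras discriminant d̃(y) = (t − y)² − 4t²y³ factors in F[y] as d̃(y) = −4t²·(y − 1/W²)·(y² − (1/(4t²) − 1/W²)·y + W²/4). In particular 1/W² is a root of d̃, and the other two roots y₁, y₂ satisfy y₁ + y₂ = 1/(4t²) − 1/W² and y₁·y₂ = W²/4. -/
open Polynomial

/-- Factorization of the Kreweras discriminant `d̃(y) = (t-y)² - 4t²y³`:
it equals `-4t² (y - 1/W²)(y² - (1/(4t²) - 1/W²) y + W²/4)`, so that `1/W²` is a root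
and the other two roots `y₁, y₂` satisfy `y₁ + y₂ = 1/(4t²) - 1/W²`, `y₁ y₂ = W²/4`. -/
theorem kreweras_discriminant_factorization
    (F : Type*) [Field F] [CharZero F] (t W : F)
    (ht : t ≠ 0) (hW : W ≠ 0) (hrel : W = t * (2 + W ^ 3)) :
    ((C t - X) ^ 2 - C (4 * t ^ 2) * X ^ 3 =
      C (-4 * t ^ 2) * (X - C (1 / W ^ 2)) *
        (X ^ 2 - C (1 / (4 * t ^ 2) - 1 / W ^ 2) * X + C (W ^ 2 / 4))) ∧
    ((t - 1 / W ^ 2) ^ 2 - 4 * t ^ 2 * (1 / W ^ 2) ^ 3 = 0) ∧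
    (∀ y₁ y₂ : F,
      X ^ 2 - C (1 / (4 * t ^ 2) - 1 / W ^ 2) * X + C (W ^ 2 / 4) =
          (X - C y₁) * (X - C y₂) →
        y₁ + y₂ = 1 / (4 * t ^ 2) - 1 / W ^ 2 ∧ y₁ * y₂ = W ^ 2 / 4) := by
  have hW2 : W ^ 2 ≠ 0 := pow_ne_zero _ hW
  have hW4 : W ^ 4 ≠ 0 := pow_ne_zero _ hW
  have hW6 : W ^ 6 ≠ 0 := pow_ne_zero _ hW
  have h4t2 : (4 : F) * t ^ 2 ≠ 0 :=
    mul_ne_zero (by norm_num) (pow_ne_zero _ ht)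
  have key : t ^ 2 * W ^ 6 - 2 * t * W ^ 4 + W ^ 2 - 4 * t ^ 2 = 0 := by
    linear_combination (-(t * W ^ 3) + W + 2 * t) * hrel
  refine ⟨?_, ?_, ?_⟩
  · have a2 : (4 * t ^ 2 : F) * ((1 / (4 * t ^ 2) - 1 / W ^ 2) + 1 / W ^ 2) = 1 := by
      field_simp
      ring
    have a1 : (4 * t ^ 2 : F) * (W ^ 2 / 4 + (1 / (4 * t ^ 2) - 1 / W ^ 2) * (1 / W ^ 2)) = 2 * t := by
      have a1' : ((4 * t ^ 2 : F) * (W ^ 2 / 4 + (1 / (4 * t ^ 2) - 1 / W ^ 2) * (1 / W ^ 2)) - 2 * t) * W ^ 4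
          = t ^ 2 * W ^ 6 - 2 * t * W ^ 4 + W ^ 2 - 4 * t ^ 2 := by
        field_simp
        ring
      rw [key] at a1'
      have h0 := (mul_eq_zero.mp a1').resolve_right hW4
      linear_combination h0
    have a0 : (4 * t ^ 2 : F) * (1 / W ^ 2 * (W ^ 2 / 4)) = t ^ 2 := by
      field_simp
    have A2 : C (4 * t ^ 2 : F) * (C (1 / (4 * t ^ 2) - 1 / W ^ 2) + C (1 / W ^ 2)) = 1 := by
      rw [← C_add, ← C_mul, a2, C_1]
    have A1 : C (4 * t ^ 2 : F) * (C (W ^ 2 / 4) + C (1 / (4 * t ^ 2) - 1 / W ^ 2) * C (1 / W ^ 2)) = 2 * C t := by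
      rw [← C_mul, ← C_add, ← C_mul, a1, C_mul, map_ofNat]
    have A0 : C (4 * t ^ 2 : F) * (C (1 / W ^ 2) * C (W ^ 2 / 4)) = C t ^ 2 := by
      rw [← C_mul, ← C_mul, a0, C_pow]
    have hneg : C (-4 * t ^ 2 : F) = -C (4 * t ^ 2) := by
      rw [← C_neg]; ring_nf
    rw [hneg]
    linear_combination A1 * X - A2 * X ^ 2 - A0
  · have p2' : ((t - 1 / W ^ 2) ^ 2 - 4 * t ^ 2 * (1 / W ^ 2) ^ 3) * W ^ 6
        = t ^ 2 * W ^ 6 - 2 * t * W ^ 4 + W ^ 2 - 4 * t ^ 2 := by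
      field_simp
      ring
    rw [key] at p2'
    exact (mul_eq_zero.mp p2').resolve_right hW6
  · intro y₁ y₂ h
    have hs : C (y₁ + y₂) * X - C (y₁ * y₂) = C (1 / (4 * t ^ 2) - 1 / W ^ 2) * X - C (W ^ 2 / 4) := by
      rw [C_add, C_mul]
      linear_combination h
    have e1 := congrArg (fun p => Polynomial.coeff p 1) hs
    have e0 := congrArg (fun p => Polynomial.coeff p 0) hs
    simp at e1 e0
    exact ⟨by linear_combination e1, by linear_combination e0⟩
end

section
/- Let F be a field of characteristic zero and let t, W ∈ F with t ≠ 0, W ≠ 0 and W = t·(2 + W³). Let y₁, y₂ ∈ F ∖ {0} satisfy y₁ + y₂ = 1/(4t²) − 1/W² and y₁·y₂ = W²/4. Then ((1/y₁ − 1/W)·(1/y₂ − 1/W))² · (1 − y₁W²)·(1 − y₂W²) = (1 − W³)³ / W⁴. (Equivalently, with w(y) = (1/y − 1/W)·√(1 − yW²), the product P = w(y₁)·w(y₂) satisfies P² = (1 − W³)³/W⁴, i.e. P = (1 − W³)^{3/2}/W².) -/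
/-- The product `P = w(y₁) w(y₂)` of the values of the Kreweras conformal gluing
function `w(y) = (1/y - 1/W)√(1 - yW²)` at the two finite branch points satisfies
`P² = (1 - W³)³ / W⁴`. -/
theorem kreweras_gluing_product
    (F : Type*) [Field F] [CharZero F] (t W y₁ y₂ : F)
    (ht : t ≠ 0) (hW : W ≠ 0) (hrel : W = t * (2 + W ^ 3))
    (hy₁ : y₁ ≠ 0) (hy₂ : y₂ ≠ 0)
    (hsum : y₁ + y₂ = 1 / (4 * t ^ 2) - 1 / W ^ 2)
    (hprod : y₁ * y₂ = W ^ 2 / 4) :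
    ((1 / y₁ - 1 / W) * (1 / y₂ - 1 / W)) ^ 2 *
        ((1 - y₁ * W ^ 2) * (1 - y₂ * W ^ 2)) =
      (1 - W ^ 3) ^ 3 / W ^ 4 := by
  have hs : y₁ + y₂ = W * (W ^ 3 + 4) / 4 := by
    have hW2 : W ^ 2 = t ^ 2 * (2 + W ^ 3) ^ 2 := by
      linear_combination (W + t * (2 + W ^ 3)) * hrel
    have h4t : (4 * t ^ 2 : F) ≠ 0 := mul_ne_zero (by norm_num) (pow_ne_zero _ ht)
    have h4W : (4 * W ^ 2 : F) ≠ 0 := mul_ne_zero (by norm_num) (pow_ne_zero _ hW)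
    have hinv : 1 / (4 * t ^ 2) = (2 + W ^ 3) ^ 2 / (4 * W ^ 2) := by
      rw [div_eq_div_iff h4t h4W]
      linear_combination 4 * hW2
    rw [hsum, hinv]
    field_simp
    ring
  have e1 : (1 / y₁ - 1 / W) * (1 / y₂ - 1 / W) = (1 - W ^ 3) / W ^ 2 := by
    have h : (1 / y₁ - 1 / W) * (1 / y₂ - 1 / W)
        = (W ^ 2 - (y₁ + y₂) * W + y₁ * y₂) / (W ^ 2 * (y₁ * y₂)) := by
      field_simp
      ring
    rw [h, hs, hprod]
    field_simp
    ring
  have e2 : (1 - y₁ * W ^ 2) * (1 - y₂ * W ^ 2) = 1 - W ^ 3 := by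
    have h : (1 - y₁ * W ^ 2) * (1 - y₂ * W ^ 2)
        = 1 - (y₁ + y₂) * W ^ 2 + (y₁ * y₂) * W ^ 4 := by ring
    rw [h, hs, hprod]
    field_simp
    ring
  rw [e1, e2]
  field_simp
end

section
/- Let F be a field of characteristic zero and let t, W ∈ F with t ≠ 0, W ≠ 0 and W = t·(2 + W³). Let y₁, y₂ ∈ F ∖ {0} satisfy y₁ + y₂ = 1/(4t²) − 1/W² and y₁·y₂ = W²/4. Then (1 − y₁W²)·(1/y₁ − 1/W)² + (1 − y₂W²)·(1/y₂ − 1/W)² = −(W⁶ − 20W³ − 8)/(4W²). (Equivalently, with w(y) = (1/y − 1/W)·√(1 − yW²) and S = w(y₁) + w(y₂), P = w(y₁)·w(y₂), one has S² = 2P − (W⁶ − 20W³ − 8)/(4W²).) -/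
/-- The sum `S = w(y₁) + w(y₂)` of the values of the Kreweras conformal gluing
function `w(y) = (1/y - 1/W)√(1 - yW²)` at the two finite branch points satisfies
`S² - 2P = Σᵢ (1 - yᵢW²)(1/yᵢ - 1/W)² = -(W⁶ - 20W³ - 8)/(4W²)`. -/
theorem kreweras_gluing_sum_of_squares
    (F : Type*) [Field F] [CharZero F] (t W y₁ y₂ : F)
    (ht : t ≠ 0) (hW : W ≠ 0) (hrel : W = t * (2 + W ^ 3))
    (hy₁ : y₁ ≠ 0) (hy₂ : y₂ ≠ 0)
    (hsum : y₁ + y₂ = 1 / (4 * t ^ 2) - 1 / W ^ 2)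
    (hprod : y₁ * y₂ = W ^ 2 / 4) :
    (1 - y₁ * W ^ 2) * (1 / y₁ - 1 / W) ^ 2 +
        (1 - y₂ * W ^ 2) * (1 / y₂ - 1 / W) ^ 2 =
      -(W ^ 6 - 20 * W ^ 3 - 8) / (4 * W ^ 2) := by
  have hW2 : W ^ 2 = t ^ 2 * (2 + W ^ 3) ^ 2 := by
    linear_combination (W + t * (2 + W ^ 3)) * hrel
  have hsum' : y₁ + y₂ = (W ^ 4 + 4 * W) / 4 := by
    have h4 : (4 : F) * t ^ 2 * W ^ 2 ≠ 0 := by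
      simp [ht, hW]
    have h5 : (y₁ + y₂) * (4 * t ^ 2 * W ^ 2) = ((W ^ 4 + 4 * W) / 4) * (4 * t ^ 2 * W ^ 2) := by
      field_simp at hsum
      linear_combination hsum + hW2
    exact mul_right_cancel₀ h4 h5
  have key : 4 * ((1 - y₁ * W ^ 2) * (W - y₁) ^ 2 * y₂ ^ 2
      + (1 - y₂ * W ^ 2) * (W - y₂) ^ 2 * y₁ ^ 2)
      + (W ^ 6 - 20 * W ^ 3 - 8) * y₁ ^ 2 * y₂ ^ 2 = 0 := by
    linear_combination
      (4 * W ^ 3 + W ^ 6 + 4 * y₂ * W ^ 2 + 2 * y₂ * W ^ 5 + 4 * y₁ * W ^ 2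
        - 8 * y₁ * y₂ * W - 4 * y₁ * y₂ * W ^ 4 - 8 * y₁ * y₂ ^ 2 * W ^ 3
        - 4 * y₁ ^ 2 * y₂ ^ 2 * W ^ 2) * hsum' +
      (-16 * W ^ 2 - 8 * W ^ 5 - W ^ 8 - 8 * y₂ * W ^ 4 - 2 * y₂ * W ^ 7
        + 8 * y₂ ^ 2 * W ^ 3) * hprod
  field_simp


  linear_combination key
end
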